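/- Let X be a δ-regular set with constant C_R on scales α₀ to α₁. Let I be an interval and ρ > 0 satisfy α₀ ≤ ρ ≤ |I| ≤ α₁. Then there exists a nonoverlapping collection J of at most 12 C_R² (|I|/ρ)^δ intervals, each of size ρ and each of the form ρ[j, j+1] with j ∈ ℤ, such that X ∩ I ⊂ ⋃_{J ∈ 𝒥} J. -/

import Mathlib

open MeasureTheory

/-- A nonempty closed set `X ⊆ ℝ` is `δ`-regular with constant `C_R ≥ 1` on scales `α₀` to `α₁`. -/
def IsDeltaRegular (X : Set ℝ) (δ C_R α₀ α₁ : ℝ) : Prop :=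
  X.Nonempty ∧ IsClosed X ∧ 0 ≤ δ ∧ δ ≤ 1 ∧ 1 ≤ C_R ∧
  ∃ μ : Measure ℝ,
    μ Xᶜ = 0 ∧
    (∀ a b : ℝ, a ≤ b → α₀ ≤ b - a → b - a ≤ α₁ →
      μ (Set.Icc a b) ≤ ENNReal.ofReal (C_R * (b - a) ^ δ)) ∧
    (∀ a b : ℝ, a ≤ b → α₀ ≤ b - a → b - a ≤ α₁ → (a + b) / 2 ∈ X →
      ENNReal.ofReal (C_R⁻¹ * (b - a) ^ δ) ≤ μ (Set.Icc a b))

/-- Covering lemma for regular sets: `X ∩ I` is covered by at most `12 C_R² (|I|/ρ)^δ`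
intervals of the form `ρ[j, j+1]`, `j ∈ ℤ` (these are automatically nonoverlapping). -/
theorem covering_of_regular (X : Set ℝ) (δ C_R α₀ α₁ a b ρ : ℝ)
    (hreg : IsDeltaRegular X δ C_R α₀ α₁) (hab : a ≤ b) (hρ : 0 < ρ)
    (h₁ : α₀ ≤ ρ) (h₂ : ρ ≤ b - a) (h₃ : b - a ≤ α₁) :
    ∃ J : Finset ℤ, (J.card : ℝ) ≤ 12 * C_R ^ 2 * ((b - a) / ρ) ^ δ ∧
      X ∩ Set.Icc a b ⊆ ⋃ j ∈ J, Set.Icc (ρ * j) (ρ * (j + 1)) := by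
  classical
  obtain ⟨-, -, hδ0, -, hC, μ, -, hup, hlow⟩ := hreg
  have hCpos : (0:ℝ) < C_R := by linarith
  have hba : (0:ℝ) < b - a := lt_of_lt_of_le hρ h₂
  set J : Finset ℤ := (Finset.Icc ⌊a/ρ⌋ ⌊b/ρ⌋).filter
    (fun j => ∃ x, x ∈ X ∧ a ≤ x ∧ x ≤ b ∧ ρ*j ≤ x ∧ x ≤ ρ*(j+1)) with hJdef
  have hmem : ∀ j ∈ J, ∃ x, x ∈ X ∧ a ≤ x ∧ x ≤ b ∧ ρ*j ≤ x ∧ x ≤ ρ*(j+1) := by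
    intro j hj; exact (Finset.mem_filter.mp hj).2
  choose! f hfX hfa hfb hfl hfr using hmem
  -- lower bound for the small interval around each chosen point
  have hlowj : ∀ j ∈ J, ENNReal.ofReal (C_R⁻¹ * ρ^δ) ≤
      μ (Set.Icc (f j - ρ/2) (f j + ρ/2)) := by
    intro j hj
    have hmid : ((f j - ρ/2) + (f j + ρ/2))/2 = f j := by ring
    have h := hlow (f j - ρ/2) (f j + ρ/2) (by linarith) (by linarith) (by linarith)
      (by rw [hmid]; exact hfX j hj)
    rwa [show f j + ρ/2 - (f j - ρ/2) = ρ by ring] at h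
  -- upper bound for the big interval
  have hbδnn : (0:ℝ) ≤ C_R * (b-a)^δ :=
    mul_nonneg hCpos.le (Real.rpow_nonneg hba.le δ)
  have hbig : μ (Set.Icc (a-ρ) (b+ρ)) ≤ ENNReal.ofReal (3 * (C_R * (b-a)^δ)) := by
    have hsub : Set.Icc (a-ρ) (b+ρ) ⊆
        Set.Icc (a-ρ) a ∪ (Set.Icc a b ∪ Set.Icc b (b+ρ)) := by
      intro x hx
      simp only [Set.mem_Icc, Set.mem_union] at *
      rcases le_total x a with h | h
      · exact Or.inl ⟨hx.1, h⟩
      · rcases le_total x b with h' | h'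
        · exact Or.inr (Or.inl ⟨h, h'⟩)
        · exact Or.inr (Or.inr ⟨h', hx.2⟩)
    have hρδle : C_R * ρ^δ ≤ C_R * (b-a)^δ :=
      mul_le_mul_of_nonneg_left (Real.rpow_le_rpow hρ.le h₂ hδ0) hCpos.le
    have h1 := hup (a-ρ) a (by linarith) (by linarith) (by linarith)
    rw [show a - (a-ρ) = ρ by ring] at h1
    have h2 := hup a b hab (by linarith) h₃
    have h3 := hup b (b+ρ) (by linarith) (by linarith) (by linarith)
    rw [show b + ρ - b = ρ by ring] at h3
    calc μ (Set.Icc (a-ρ) (b+ρ))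
        ≤ μ (Set.Icc (a-ρ) a ∪ (Set.Icc a b ∪ Set.Icc b (b+ρ))) := measure_mono hsub
      _ ≤ μ (Set.Icc (a-ρ) a) + μ (Set.Icc a b ∪ Set.Icc b (b+ρ)) := measure_union_le _ _
      _ ≤ μ (Set.Icc (a-ρ) a) + (μ (Set.Icc a b) + μ (Set.Icc b (b+ρ))) :=
          add_le_add le_rfl (measure_union_le _ _)
      _ ≤ ENNReal.ofReal (C_R * (b-a)^δ) +
            (ENNReal.ofReal (C_R * (b-a)^δ) + ENNReal.ofReal (C_R * (b-a)^δ)) :=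
          add_le_add (h1.trans (ENNReal.ofReal_le_ofReal hρδle))
            (add_le_add h2 (h3.trans (ENNReal.ofReal_le_ofReal hρδle)))
      _ = ENNReal.ofReal (3 * (C_R * (b-a)^δ)) := by
          rw [← ENNReal.ofReal_add hbδnn hbδnn, ← ENNReal.ofReal_add hbδnn (by linarith)]
          ring_nf
  -- separation of well-spaced intervals
  have hsep : ∀ j ∈ J, ∀ j' ∈ J, j + 3 ≤ j' →
      Disjoint (Set.Icc (f j - ρ/2) (f j + ρ/2)) (Set.Icc (f j' - ρ/2) (f j' + ρ/2)) := by
    intro j hj j' hj' hle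
    rw [Set.disjoint_left]
    intro x hx hx'
    simp only [Set.mem_Icc] at hx hx'
    have h1 : f j ≤ ρ*(j+1) := hfr j hj
    have h2 : ρ*j' ≤ f j' := hfl j' hj'
    have hjj : (j:ℝ) + 3 ≤ j' := by exact_mod_cast hle
    nlinarith
  -- cardinality bound for each residue class mod 3
  have key : ∀ r : ℤ, ((J.filter (fun j => j % 3 = r)).card : ℝ) * (C_R⁻¹ * ρ^δ)
      ≤ 3 * (C_R * (b-a)^δ) := by
    intro r
    set S := J.filter (fun j => j % 3 = r) with hSdef
    have hSJ : ∀ j ∈ S, j ∈ J := fun j hj => Finset.mem_of_mem_filter j hj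
    have hdisj : (S : Set ℤ).PairwiseDisjoint
        (fun j => Set.Icc (f j - ρ/2) (f j + ρ/2)) := by
      intro j hj j' hj' hne
      simp only [Finset.coe_filter, Set.mem_setOf_eq, hSdef, Finset.mem_filter] at hj hj'
      rcases lt_or_gt_of_ne hne with h | h
      · exact hsep j hj.1 j' hj'.1 (by omega)
      · exact (hsep j' hj'.1 j hj.1 (by omega)).symm
    have hsum : ∑ j ∈ S, μ (Set.Icc (f j - ρ/2) (f j + ρ/2))
        = μ (⋃ j ∈ S, Set.Icc (f j - ρ/2) (f j + ρ/2)) :=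
      (measure_biUnion_finset hdisj (fun _ _ => measurableSet_Icc)).symm
    have hsub2 : (⋃ j ∈ S, Set.Icc (f j - ρ/2) (f j + ρ/2)) ⊆ Set.Icc (a-ρ) (b+ρ) := by
      intro x hx
      simp only [Set.mem_iUnion, Set.mem_Icc] at hx
      obtain ⟨j, hj, hx1, hx2⟩ := hx
      have := hfa j (hSJ j hj)
      have := hfb j (hSJ j hj)
      exact ⟨by linarith, by linarith⟩
    have hcardle : (S.card : ENNReal) * ENNReal.ofReal (C_R⁻¹ * ρ^δ)
        ≤ ENNReal.ofReal (3 * (C_R * (b-a)^δ)) := by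
      calc (S.card : ENNReal) * ENNReal.ofReal (C_R⁻¹ * ρ^δ)
          = ∑ _j ∈ S, ENNReal.ofReal (C_R⁻¹ * ρ^δ) := by
            rw [Finset.sum_const, nsmul_eq_mul]
        _ ≤ ∑ j ∈ S, μ (Set.Icc (f j - ρ/2) (f j + ρ/2)) :=
            Finset.sum_le_sum (fun j hj => hlowj j (hSJ j hj))
        _ = μ (⋃ j ∈ S, Set.Icc (f j - ρ/2) (f j + ρ/2)) := hsum
        _ ≤ μ (Set.Icc (a-ρ) (b+ρ)) := measure_mono hsub2
        _ ≤ ENNReal.ofReal (3 * (C_R * (b-a)^δ)) := hbig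
    rw [show ((S.card : ENNReal)) = ENNReal.ofReal (S.card : ℝ) by
          rw [ENNReal.ofReal_natCast],
        ← ENNReal.ofReal_mul (Nat.cast_nonneg _)] at hcardle
    exact (ENNReal.ofReal_le_ofReal_iff (by linarith)).mp hcardle
  -- assemble the cardinality bound
  refine ⟨J, ?_, ?_⟩
  · have hρδ : (0:ℝ) < ρ^δ := Real.rpow_pos_of_pos hρ δ
    have hsubJ : J ⊆ (J.filter (fun j => j % 3 = 0)) ∪
        ((J.filter (fun j => j % 3 = 1)) ∪ (J.filter (fun j => j % 3 = 2))) := by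
      intro j hj
      simp only [Finset.mem_union, Finset.mem_filter]
      have : j % 3 = 0 ∨ j % 3 = 1 ∨ j % 3 = 2 := by omega
      tauto
    have hcard : (J.card : ℝ) ≤ ((J.filter (fun j => j % 3 = 0)).card : ℝ)
        + ((J.filter (fun j => j % 3 = 1)).card : ℝ)
        + ((J.filter (fun j => j % 3 = 2)).card : ℝ) := by
      have h := (Finset.card_le_card hsubJ).trans
        ((Finset.card_union_le _ _).trans
          (add_le_add le_rfl (Finset.card_union_le _ _)))
      have h' : ((J.card : ℕ) : ℝ) ≤ (((J.filter (fun j => j % 3 = 0)).card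
          + ((J.filter (fun j => j % 3 = 1)).card
          + (J.filter (fun j => j % 3 = 2)).card) : ℕ) : ℝ) := by exact_mod_cast h
      push_cast at h'
      linarith [h']
    have h9 : (J.card : ℝ) * (C_R⁻¹ * ρ^δ) ≤ 9 * (C_R * (b-a)^δ) := by
      have k0 := key 0; have k1 := key 1; have k2 := key 2
      have hcnn : (0:ℝ) ≤ C_R⁻¹ * ρ^δ :=
        mul_nonneg (inv_nonneg.mpr hCpos.le) hρδ.le
      nlinarith [mul_le_mul_of_nonneg_right hcard hcnn]
    have h9' : (J.card : ℝ) * ρ^δ ≤ 9 * C_R^2 * (b-a)^δ := by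
      have hm := mul_le_mul_of_nonneg_left h9 hCpos.le
      have hCC : C_R * C_R⁻¹ = 1 := mul_inv_cancel₀ hCpos.ne'
      have e1 : C_R * ((J.card:ℝ) * (C_R⁻¹ * ρ^δ)) = (C_R * C_R⁻¹) * ((J.card:ℝ) * ρ^δ) := by
        ring
      rw [e1, hCC, one_mul] at hm
      nlinarith [hm]
    rw [Real.div_rpow hba.le hρ.le,
        show 12 * C_R^2 * ((b-a)^δ / ρ^δ) = (12 * C_R^2 * (b-a)^δ) / ρ^δ by ring,
        le_div_iff₀ hρδ]
    nlinarith [mul_nonneg (mul_nonneg (by norm_num : (0:ℝ) ≤ 3) (sq_nonneg C_R))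
      (Real.rpow_nonneg hba.le δ)]
  · rintro x ⟨hxX, hxa, hxb⟩
    set j : ℤ := ⌊x/ρ⌋ with hjdef
    have hfl' : (j:ℝ) ≤ x/ρ := Int.floor_le _
    have hfr' : x/ρ < (j:ℝ) + 1 := Int.lt_floor_add_one _
    have hxx : ρ * (x/ρ) = x := by field_simp
    have hρj : ρ * j ≤ x := by nlinarith
    have hjρ : x ≤ ρ * (j+1) := by nlinarith
    have hjJ : j ∈ J := by
      rw [hJdef, Finset.mem_filter, Finset.mem_Icc]
      refine ⟨⟨Int.floor_le_floor (by gcongr), Int.floor_le_floor (by gcongr)⟩,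
        x, hxX, hxa, hxb, hρj, hjρ⟩
    simp only [Set.mem_iUnion, Set.mem_Icc]
    exact ⟨j, hjJ, hρj, hjρ⟩
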